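/- For every n ∈ ℕ, every LTL formula φ in the class 𝕏ⁿ (nesting depth of X at most n), and all infinite traces τ and τ' with τ ≈ₙ τ' (n-stutter equivalent): τ ⊨ φ if and only if τ' ⊨ φ. -/
import Mathlib


/-- LTL formulas over an alphabet `A`. -/
inductive LTL (A : Type) : Type where
  | atom : A → LTL A
  | not  : LTL A → LTL A
  | or   : LTL A → LTL A → LTL A
  | next : LTL A → LTL A
  | untl : LTL A → LTL A → LTL A

/-- LTL satisfaction over an infinite trace. -/
def LTL.Sat {A : Type} : (ℕ → A → Bool) → LTL A → Prop
  | τ, .atom a   => τ 0 a = true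
  | τ, .not φ    => ¬ LTL.Sat τ φ
  | τ, .or φ ψ   => LTL.Sat τ φ ∨ LTL.Sat τ ψ
  | τ, .next φ   => LTL.Sat (fun n => τ (n + 1)) φ
  | τ, .untl φ ψ => ∃ j, LTL.Sat (fun n => τ (n + j)) ψ ∧
      ∀ j' < j, LTL.Sat (fun n => τ (n + j')) φ

/-- Nesting depth of the `X` (next) operator of an LTL formula. -/
def LTL.xDepth {A : Type} : LTL A → ℕ
  | .atom _   => 0
  | .not φ    => φ.xDepth
  | .or φ ψ   => max φ.xDepth ψ.xDepth
  | .next φ   => φ.xDepth + 1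
  | .untl φ ψ => max φ.xDepth ψ.xDepth

/-- The valuation at position `i` of `τ` is `n`-redundant: it is repeated for the next
`n+1` positions. -/
def Redundant {A : Type} (n : ℕ) (τ : ℕ → A → Bool) (i : ℕ) : Prop :=
  ∀ j, 1 ≤ j → j ≤ n + 1 → τ i = τ (i + j)

/-- Deletion of the valuation at position `i` of an infinite trace. -/
def deleteAt {A : Type} (τ : ℕ → A → Bool) (i : ℕ) : ℕ → A → Bool :=
  fun m => if m < i then τ m else τ (m + 1)

/-- `τ ≺ₙ τ'`: `τ` is obtained from `τ'` by deleting one `n`-redundant valuation. -/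
def StutterStep {A : Type} (n : ℕ) (τ τ' : ℕ → A → Bool) : Prop :=
  ∃ i, Redundant n τ' i ∧ τ = deleteAt τ' i

/-- `n`-stutter equivalence `≈ₙ`: the least equivalence relation containing `≺ₙ`. -/
def NStutterEquiv {A : Type} (n : ℕ) : (ℕ → A → Bool) → (ℕ → A → Bool) → Prop :=
  Relation.EqvGen (StutterStep n)

lemma shift_deleteAt_le {A : Type} (τ' : ℕ → A → Bool) (i k : ℕ) (hk : k ≤ i) :
    (fun m => deleteAt τ' i (m + k)) = deleteAt (fun m => τ' (m + k)) (i - k) := by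
  funext m
  simp only [deleteAt]
  rcases lt_or_ge m (i - k) with h | h
  · rw [if_pos h, if_pos (by omega)]
  · rw [if_neg (by omega), if_neg (by omega)]
    show τ' (m + k + 1) = τ' (m + 1 + k)
    have e : m + k + 1 = m + 1 + k := by omega
    rw [e]

lemma shift_deleteAt_ge {A : Type} (τ' : ℕ → A → Bool) (i k : ℕ) (hk : i ≤ k) :
    (fun m => deleteAt τ' i (m + k)) = (fun m => τ' (m + (k + 1))) := by
  funext m
  simp only [deleteAt]
  rw [if_neg (by omega), Nat.add_assoc]

lemma redundant_shift {A : Type} {n : ℕ} {τ' : ℕ → A → Bool} {i k : ℕ}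
    (hr : Redundant n τ' i) (hk : k ≤ i) :
    Redundant n (fun m => τ' (m + k)) (i - k) := by
  intro j hj1 hj2
  show τ' (i - k + k) = τ' (i - k + j + k)
  have e1 : i - k + k = i := by omega
  have e2 : i - k + j + k = i + j := by omega
  rw [e1, e2]
  exact hr j hj1 hj2

lemma sat_deleteAt {A : Type} :
    ∀ (φ : LTL A) (n : ℕ), φ.xDepth ≤ n → ∀ (τ' : ℕ → A → Bool) (i : ℕ),
      Redundant n τ' i → (LTL.Sat (deleteAt τ' i) φ ↔ LTL.Sat τ' φ) := by
  intro φ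
  induction φ with
  | atom a =>
    intro n _ τ' i hr
    simp only [LTL.Sat, deleteAt]
    rcases Nat.eq_zero_or_pos i with h0 | hp
    · subst h0
      have h1 := hr 1 le_rfl (by omega)
      simp only [Nat.lt_irrefl, if_false]
      rw [← h1]
    · rw [if_pos hp]
  | not φ ih =>
    intro n hn τ' i hr
    exact not_congr (ih n hn τ' i hr)
  | or φ ψ ihφ ihψ =>
    intro n hn τ' i hr
    simp only [LTL.xDepth, max_le_iff] at hn
    exact or_congr (ihφ n hn.1 τ' i hr) (ihψ n hn.2 τ' i hr)
  | next φ ih =>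
    intro n hn τ' i hr
    simp only [LTL.xDepth] at hn
    show LTL.Sat (fun m => deleteAt τ' i (m + 1)) φ ↔ LTL.Sat (fun m => τ' (m + 1)) φ
    rcases Nat.eq_zero_or_pos i with h0 | hp
    · subst h0
      rw [shift_deleteAt_ge τ' 0 1 (by omega)]
      have hr' : Redundant (n - 1) (fun m => τ' (m + 1)) 0 := by
        intro j hj1 hj2
        show τ' (0 + 1) = τ' (0 + j + 1)
        have e1 := hr 1 le_rfl (by omega)
        have e2 := hr (j + 1) (by omega) (by omega)
        simp only [Nat.zero_add] at *
        rw [← e1, e2]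
      have h2 : (fun m => τ' (m + (1 + 1))) = deleteAt (fun m => τ' (m + 1)) 0 := by
        funext m
        show τ' (m + (1 + 1)) = τ' (m + 1 + 1)
        rw [Nat.add_assoc]
      rw [h2]
      exact ih (n - 1) (by omega) _ 0 hr'
    · rw [shift_deleteAt_le τ' i 1 hp]
      exact ih n (by omega) _ (i - 1) (redundant_shift hr hp)
  | untl φ ψ ihφ ihψ =>
    intro n hn τ' i hr
    simp only [LTL.xDepth, max_le_iff] at hn
    obtain ⟨hφn, hψn⟩ := hn
    constructor
    · rintro ⟨j, hψ, hφ⟩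
      by_cases hji : j ≤ i
      · refine ⟨j, ?_, ?_⟩
        · rw [shift_deleteAt_le τ' i j hji] at hψ
          exact (ihψ n hψn _ _ (redundant_shift hr hji)).mp hψ
        · intro j' hj'
          have h1 := hφ j' hj'
          rw [shift_deleteAt_le τ' i j' (by omega)] at h1
          exact (ihφ n hφn _ _ (redundant_shift hr (by omega))).mp h1
      · refine ⟨j + 1, ?_, ?_⟩
        · rw [shift_deleteAt_ge τ' i j (by omega)] at hψ
          exact hψ
        · intro j' hj'
          by_cases h' : j' ≤ i
          · have h1 := hφ j' (by omega)
            rw [shift_deleteAt_le τ' i j' h'] at h1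
            exact (ihφ n hφn _ _ (redundant_shift hr h')).mp h1
          · have h1 := hφ (j' - 1) (by omega)
            rw [shift_deleteAt_ge τ' i (j' - 1) (by omega)] at h1
            have e : j' - 1 + 1 = j' := by omega
            rw [e] at h1
            exact h1
    · rintro ⟨j, hψ, hφ⟩
      by_cases hji : j ≤ i
      · refine ⟨j, ?_, ?_⟩
        · rw [shift_deleteAt_le τ' i j hji]
          exact (ihψ n hψn _ _ (redundant_shift hr hji)).mpr hψ
        · intro j' hj'
          rw [shift_deleteAt_le τ' i j' (by omega)]
          exact (ihφ n hφn _ _ (redundant_shift hr (by omega))).mpr (hφ j' hj')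
      · refine ⟨j - 1, ?_, ?_⟩
        · rw [shift_deleteAt_ge τ' i (j - 1) (by omega)]
          have e : j - 1 + 1 = j := by omega
          rw [e]
          exact hψ
        · intro j' hj'
          by_cases h' : j' < i
          · rw [shift_deleteAt_le τ' i j' (by omega)]
            exact (ihφ n hφn _ _ (redundant_shift hr (by omega))).mpr (hφ j' (by omega))
          · rw [shift_deleteAt_ge τ' i j' (by omega)]
            exact hφ (j' + 1) (by omega)

/-- For every `n ∈ ℕ`, every LTL formula `φ` in the class `𝕏ⁿ`
(nesting depth of the next operator at most `n`), and all infinite traces `τ ≈ₙ τ'`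
(`n`-stutter equivalent): `τ ⊨ φ` iff `τ' ⊨ φ`. -/
theorem nStutterEquiv_preserves_Xn
    {A : Type} [Finite A] (n : ℕ) (φ : LTL A) (hφ : φ.xDepth ≤ n)
    (τ τ' : ℕ → A → Bool) (h : NStutterEquiv n τ τ') :
    LTL.Sat τ φ ↔ LTL.Sat τ' φ := by
  induction h with
  | rel σ σ' hst =>
    obtain ⟨i, hr, rfl⟩ := hst
    exact sat_deleteAt φ n hφ σ' i hr
  | refl σ => exact Iff.rfl
  | symm _ _ _ ih => exact ih.symm
  | trans _ _ _ _ _ ih1 ih2 => exact ih1.trans ih2
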